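/- Let n = 2 with marginals F_1 = U[1/4, 1/4 + ε] and F_2 = U[0, 1], where 0 < ε < 1/8. Then: (a) every uniform pricing p' (with p'_1 = p'_2) has robust revenue guarantee R(p') ≤ 1/4 + ε; and (b) the nonuniform pricing p = (1/4, 5/8 − ε) has robust revenue guarantee R(p) ≥ (3/8)·(5/8 − ε) + (5/8)·(1/4) = 25/64 − (3/8)ε. In particular, for sufficiently small ε > 0, no uniform pricing is max-min optimal. -/

import Mathlib

open MeasureTheory
open scoped ENNReal NNReal

noncomputable section

/-- A buyer's purchase rule for `n` items: given a valuation profile and a vector of item prices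
(in `[0,∞]`), `choose` returns the purchased item (or `none` if nothing is purchased).
The axioms say: a purchased item has a finite price and yields nonnegative utility
(`feasible`), the purchased item maximizes utility among all items (`optimal`), and the buyer
does purchase whenever some item yields nonnegative utility (`active`). Ties among
utility-maximizing items are broken according to the (fixed) rule embodied by `choose`. -/
structure BuyerRule (n : ℕ) where
  choose : (Fin n → ℝ) → (Fin n → ℝ≥0∞) → Option (Fin n)
  feasible : ∀ v p j, choose v p = some j → p j ≠ ⊤ ∧ (p j).toReal ≤ v j
  optimal : ∀ v p j k, choose v p = some j → p k ≠ ⊤ →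
      v k - (p k).toReal ≤ v j - (p j).toReal
  active : ∀ v p, (∃ k, p k ≠ ⊤ ∧ (p k).toReal ≤ v k) → (choose v p).isSome = true

/-- The seller's revenue from valuation profile `v` under pricing `p`. -/
def BuyerRule.revenue {n : ℕ} (B : BuyerRule n) (p : Fin n → ℝ≥0∞) (v : Fin n → ℝ) : ℝ≥0∞ :=
  (B.choose v p).elim 0 (fun j => p j)

/-- A joint distribution `F` on valuation profiles is compatible with the marginals `marg`
if it is a probability measure whose `j`-th one-dimensional marginal is `marg j` for every `j`. -/
def Compatible {n : ℕ} (marg : Fin n → Measure ℝ) (F : Measure (Fin n → ℝ)) : Prop :=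
  IsProbabilityMeasure F ∧ ∀ j, F.map (fun v => v j) = marg j

/-- `R(p,F)`: the expected revenue of pricing `p` under joint distribution `F`. -/
def expRev {n : ℕ} (B : BuyerRule n) (p : Fin n → ℝ≥0∞) (F : Measure (Fin n → ℝ)) : ℝ≥0∞ :=
  ∫⁻ v, B.revenue p v ∂F

/-- `R(p)`: the robust revenue guarantee of `p`, the infimum of `R(p,F)` over compatible `F`. -/
def robustRev {n : ℕ} (B : BuyerRule n) (marg : Fin n → Measure ℝ) (p : Fin n → ℝ≥0∞) : ℝ≥0∞ :=
  ⨅ (F : Measure (Fin n → ℝ)) (_ : Compatible marg F), expRev B p F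

/-- `R*`: the optimal robust revenue guarantee over all pricings. -/
def optRobust {n : ℕ} (B : BuyerRule n) (marg : Fin n → Measure ℝ) : ℝ≥0∞ :=
  ⨆ p : Fin n → ℝ≥0∞, robustRev B marg p

/-- The uniform distribution on `[a,b]`. -/
def unif (a b : ℝ) : Measure ℝ :=
  (ENNReal.ofReal (b - a))⁻¹ • volume.restrict (Set.Icc a b)

/-! ### Auxiliary lemmas -/

lemma unif_apply (a b : ℝ) {s : Set ℝ} (hs : MeasurableSet s) :
    unif a b s = (ENNReal.ofReal (b - a))⁻¹ * volume (s ∩ Set.Icc a b) := by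
  simp [unif, Measure.restrict_apply hs]

lemma unif_prob {a b : ℝ} (h : a < b) : IsProbabilityMeasure (unif a b) := by
  constructor
  rw [unif_apply a b MeasurableSet.univ, Set.univ_inter, Real.volume_Icc,
    ENNReal.inv_mul_cancel]
  · simp only [ne_eq, ENNReal.ofReal_eq_zero, not_le]; linarith
  · exact ENNReal.ofReal_ne_top

lemma pi_marginal {n : ℕ} (μ : Fin n → Measure ℝ) [∀ i, IsProbabilityMeasure (μ i)]
    (j : Fin n) : (Measure.pi μ).map (fun v => v j) = μ j := by
  ext s hs
  rw [Measure.map_apply (measurable_pi_apply j) hs]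
  have : (fun v : Fin n → ℝ => v j) ⁻¹' s
      = Set.pi Set.univ (Function.update (fun _ => Set.univ) j s) := Set.eval_preimage
  rw [this, Measure.pi_pi, Finset.prod_eq_single j]
  · simp
  · intro b _ hb
    simp [Function.update_of_ne hb]
  · simp

/-- Two items with marginals `F_1 = U[1/4, 1/4 + ε]` and `F_2 = U[0,1]`,
`0 < ε < 1/8`. (a) Every uniform pricing `p'` (equal prices) has `R(p') ≤ 1/4 + ε`;
(b) the nonuniform pricing `p = (1/4, 5/8 − ε)` has `R(p) ≥ (3/8)(5/8 − ε) + (5/8)(1/4)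
= 25/64 − (3/8)ε`. In particular, for sufficiently small `ε` (e.g. `ε < 1/12`), no uniform
pricing is max-min optimal: every uniform pricing has `R(p') < R*`. -/
theorem uniform_pricing_not_max_min_optimal
    (ε : ℝ) (hε : 0 < ε) (hε' : ε < 1 / 8)
    (B : BuyerRule 2) (marg : Fin 2 → Measure ℝ)
    (hmarg0 : marg 0 = unif (1 / 4) (1 / 4 + ε)) (hmarg1 : marg 1 = unif 0 1)
    (p : Fin 2 → ℝ≥0∞)
    (hp0 : p 0 = ENNReal.ofReal (1 / 4)) (hp1 : p 1 = ENNReal.ofReal (5 / 8 - ε)) :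
    (∀ p' : Fin 2 → ℝ≥0∞, p' 0 = p' 1 →
        robustRev B marg p' ≤ ENNReal.ofReal (1 / 4 + ε)) ∧
    ENNReal.ofReal (25 / 64 - (3 / 8) * ε) ≤ robustRev B marg p ∧
    (ε < 1 / 12 → ∀ p' : Fin 2 → ℝ≥0∞, p' 0 = p' 1 →
        robustRev B marg p' < optRobust B marg) := by
  haveI hm : ∀ i, IsProbabilityMeasure (marg i) := by
    intro i; fin_cases i
    · show IsProbabilityMeasure (marg 0); rw [hmarg0]; exact unif_prob (by linarith)
    · show IsProbabilityMeasure (marg 1); rw [hmarg1]; exact unif_prob (by norm_num)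
  -- Part (a)
  have ha : ∀ p' : Fin 2 → ℝ≥0∞, p' 0 = p' 1 →
      robustRev B marg p' ≤ ENNReal.ofReal (1 / 4 + ε) := by
    intro p' hpe
    have hpall : ∀ j : Fin 2, p' j = p' 1 := by
      intro j; fin_cases j
      · exact hpe
      · rfl
    have hcompat : Compatible marg (Measure.pi marg) :=
      ⟨inferInstance, fun j => pi_marginal marg j⟩
    have hle : robustRev B marg p' ≤ expRev B p' (Measure.pi marg) := by
      unfold robustRev
      exact iInf₂_le (Measure.pi marg) hcompat
    refine hle.trans ?_
    set q := p' 1 with hq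
    by_cases hql : q ≤ ENNReal.ofReal (1 / 4 + ε)
    · refine le_trans ?_ hql
      have hrev_le : ∀ v, B.revenue p' v ≤ q := by
        intro v
        cases h : B.choose v p' with
        | none => simp [BuyerRule.revenue, h]
        | some j => simp [BuyerRule.revenue, h, (hpall j).le]
      calc expRev B p' (Measure.pi marg) ≤ ∫⁻ _, q ∂(Measure.pi marg) :=
            lintegral_mono hrev_le
        _ = q := by simp
    · push_neg at hql
      by_cases hqt : q = ⊤
      · have hz : ∀ v, B.revenue p' v = 0 := by
          intro v
          cases h : B.choose v p' with
          | none => simp [BuyerRule.revenue, h]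
          | some j =>
            exact absurd (by rw [hpall j]; exact hqt) (B.feasible v p' j h).1
        simp only [expRev, hz, lintegral_zero]
        exact zero_le
      · set t := q.toReal with htdef
        have ht : 1 / 4 + ε < t :=
          (ENNReal.ofReal_lt_iff_lt_toReal (by linarith) hqt).1 hql
        have ht0 : (0 : ℝ) ≤ t := by linarith
        set E : Set (Fin 2 → ℝ) := {v | t ≤ v 0} ∪ {v | t ≤ v 1} with hE
        have hE0 : MeasurableSet {v : Fin 2 → ℝ | t ≤ v 0} :=
          (measurable_pi_apply 0) measurableSet_Ici
        have hE1 : MeasurableSet {v : Fin 2 → ℝ | t ≤ v 1} :=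
          (measurable_pi_apply 1) measurableSet_Ici
        have hEm : MeasurableSet E := hE0.union hE1
        have hrev : ∀ v, B.revenue p' v ≤ E.indicator (fun _ => q) v := by
          intro v
          cases h : B.choose v p' with
          | none => simp [BuyerRule.revenue, h]
          | some j =>
            have hf := B.feasible v p' j h
            have htj : t ≤ v j := by
              have h2 := hf.2
              rw [hpall j] at h2
              exact h2
            have hvE : v ∈ E := by
              have hj2 : j = 0 ∨ j = 1 := by omega
              rcases hj2 with rfl | rfl
              · exact Or.inl htj
              · exact Or.inr htj
            simp [BuyerRule.revenue, h, Set.indicator_of_mem hvE, (hpall j).le]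
        have h0 : (Measure.pi marg) {v : Fin 2 → ℝ | t ≤ v 0} = 0 := by
          have hpre : {v : Fin 2 → ℝ | t ≤ v 0}
              = (fun v : Fin 2 → ℝ => v 0) ⁻¹' Set.Ici t := rfl
          rw [hpre, ← Measure.map_apply (measurable_pi_apply 0) measurableSet_Ici,
            pi_marginal marg 0, hmarg0, unif_apply _ _ measurableSet_Ici]
          have : Set.Ici t ∩ Set.Icc (1 / 4) (1 / 4 + ε) = ∅ := by
            ext x
            simp only [Set.mem_inter_iff, Set.mem_Ici, Set.mem_Icc, Set.mem_empty_iff_false,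
              iff_false, not_and, and_imp]
            intro h1 h2 h3
            linarith
          rw [this]
          simp
        have h1 : (Measure.pi marg) {v : Fin 2 → ℝ | t ≤ v 1} = ENNReal.ofReal (1 - t) := by
          have hpre : {v : Fin 2 → ℝ | t ≤ v 1}
              = (fun v : Fin 2 → ℝ => v 1) ⁻¹' Set.Ici t := rfl
          rw [hpre, ← Measure.map_apply (measurable_pi_apply 1) measurableSet_Ici,
            pi_marginal marg 1, hmarg1, unif_apply _ _ measurableSet_Ici]
          have hint : Set.Ici t ∩ Set.Icc 0 1 = Set.Icc t 1 := by
            ext x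
            simp only [Set.mem_inter_iff, Set.mem_Ici, Set.mem_Icc]
            constructor
            · rintro ⟨a, _, c⟩; exact ⟨a, c⟩
            · rintro ⟨a, c⟩; exact ⟨a, le_trans ht0 a, c⟩
          rw [hint, Real.volume_Icc]
          norm_num
        calc expRev B p' (Measure.pi marg)
            ≤ ∫⁻ v, E.indicator (fun _ => q) v ∂(Measure.pi marg) := lintegral_mono hrev
          _ = q * (Measure.pi marg) E := lintegral_indicator_const hEm q
          _ ≤ q * ((Measure.pi marg) {v : Fin 2 → ℝ | t ≤ v 0}
                + (Measure.pi marg) {v : Fin 2 → ℝ | t ≤ v 1}) := by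
              gcongr
              exact measure_union_le _ _
          _ = ENNReal.ofReal t * ENNReal.ofReal (1 - t) := by
              rw [h0, h1, zero_add, ← ENNReal.ofReal_toReal hqt, ← htdef]
          _ = ENNReal.ofReal (t * (1 - t)) := (ENNReal.ofReal_mul ht0).symm
          _ ≤ ENNReal.ofReal (1 / 4 + ε) := ENNReal.ofReal_le_ofReal (by nlinarith [sq_nonneg (t - 1/2)])
  -- Part (b)
  have hb : ENNReal.ofReal (25 / 64 - (3 / 8) * ε) ≤ robustRev B marg p := by
    unfold robustRev
    refine le_iInf₂ fun F hF => ?_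
    obtain ⟨hFprob, hFmarg⟩ := hF
    haveI := hFprob
    have hS : ∀ᵐ v ∂F, v 0 ∈ Set.Icc (1 / 4 : ℝ) (1 / 4 + ε) := by
      rw [ae_iff]
      have hpre : {v : Fin 2 → ℝ | ¬ v 0 ∈ Set.Icc (1 / 4 : ℝ) (1 / 4 + ε)}
          = (fun v : Fin 2 → ℝ => v 0) ⁻¹' (Set.Icc (1 / 4 : ℝ) (1 / 4 + ε))ᶜ := rfl
      rw [hpre, ← Measure.map_apply (measurable_pi_apply 0) measurableSet_Icc.compl,
        hFmarg 0, hmarg0, unif_apply _ _ measurableSet_Icc.compl,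
        Set.compl_inter_self]
      simp
    set T : Set (Fin 2 → ℝ) := {v | 5 / 8 < v 1} with hT
    have hTm : MeasurableSet T := (measurable_pi_apply 1) measurableSet_Ioi
    have hp0ne : p 0 ≠ ⊤ := by rw [hp0]; exact ENNReal.ofReal_ne_top
    have hp1ne : p 1 ≠ ⊤ := by rw [hp1]; exact ENNReal.ofReal_ne_top
    have hp0t : (p 0).toReal = 1 / 4 := by rw [hp0]; exact ENNReal.toReal_ofReal (by norm_num)
    have hp1t : (p 1).toReal = 5 / 8 - ε := by
      rw [hp1]; exact ENNReal.toReal_ofReal (by linarith)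
    have key : ∀ᵐ v ∂F, ENNReal.ofReal (1 / 4)
        + T.indicator (fun _ => ENNReal.ofReal (3 / 8 - ε)) v ≤ B.revenue p v := by
      filter_upwards [hS] with v hv
      obtain ⟨hv1, hv2⟩ := hv
      have hsome := B.active v p ⟨0, hp0ne, by rw [hp0t]; exact hv1⟩
      obtain ⟨j, hj⟩ := Option.isSome_iff_exists.1 hsome
      have hrev : B.revenue p v = p j := by simp [BuyerRule.revenue, hj]
      rw [hrev]
      have hj2 : j = 0 ∨ j = 1 := by omega
      rcases hj2 with rfl | rfl
      · by_cases hvT : v ∈ T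
        · exfalso
          have hopt := B.optimal v p 0 1 hj hp1ne
          rw [hp0t, hp1t] at hopt
          have hvT' : (5 : ℝ) / 8 < v 1 := hvT
          linarith
        · rw [Set.indicator_of_notMem hvT, add_zero, hp0]
      · by_cases hvT : v ∈ T
        · rw [Set.indicator_of_mem hvT, hp1,
            ← ENNReal.ofReal_add (by norm_num) (by linarith)]
          exact ENNReal.ofReal_le_ofReal (by linarith)
        · rw [Set.indicator_of_notMem hvT, add_zero, hp1]
          exact ENNReal.ofReal_le_ofReal (by linarith)
    have hFT : F T = ENNReal.ofReal (3 / 8) := by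
      have hpre : T = (fun v : Fin 2 → ℝ => v 1) ⁻¹' Set.Ioi (5 / 8 : ℝ) := rfl
      rw [hpre, ← Measure.map_apply (measurable_pi_apply 1) measurableSet_Ioi,
        hFmarg 1, hmarg1, unif_apply _ _ measurableSet_Ioi]
      have hint : Set.Ioi (5 / 8 : ℝ) ∩ Set.Icc 0 1 = Set.Ioc (5 / 8 : ℝ) 1 := by
        ext x
        simp only [Set.mem_inter_iff, Set.mem_Ioi, Set.mem_Icc, Set.mem_Ioc]
        constructor
        · rintro ⟨a, _, c⟩; exact ⟨a, c⟩
        · rintro ⟨a, c⟩; exact ⟨a, by linarith, c⟩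
      rw [hint, Real.volume_Ioc]
      norm_num
    have hintle : ∫⁻ v, (ENNReal.ofReal (1 / 4)
        + T.indicator (fun _ => ENNReal.ofReal (3 / 8 - ε)) v) ∂F ≤ expRev B p F :=
      lintegral_mono_ae key
    refine le_trans ?_ hintle
    rw [lintegral_add_left measurable_const, lintegral_const,
      lintegral_indicator_const hTm, hFT, measure_univ, mul_one,
      ← ENNReal.ofReal_mul (by linarith),
      ← ENNReal.ofReal_add (by norm_num) (by nlinarith)]
    exact ENNReal.ofReal_le_ofReal (by nlinarith)
  refine ⟨ha, hb, fun h12 p' hpe => ?_⟩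
  calc robustRev B marg p' ≤ ENNReal.ofReal (1 / 4 + ε) := ha p' hpe
    _ < ENNReal.ofReal (25 / 64 - (3 / 8) * ε) := by
        rw [ENNReal.ofReal_lt_ofReal_iff (by linarith)]
        linarith
    _ ≤ robustRev B marg p := hb
    _ ≤ optRobust B marg := le_iSup _ p
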